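/- arXiv:1402.5361 — 3 statements merged into one kernel-verified Lean document; each statement's English description precedes it below -/
import Mathlib

section
/- Let d > 2 and, for 2 ≤ s ≤ d-1, let M_d^s denote the maximal genus of a finite O-sequence of multiplicity d and length s. Then M_d^s < C(s, 2) - 1 if and only if (2d + 1 - √(8d - 15))/2 < s ≤ d-1. Moreover, for every s with (2d + 1 - √(8d - 15))/2 < s ≤ d-1, every integer in the interval [M_d^s + 1, C(s, 2) - 1] is a gap in R_d. -/
/-- The Macaulay bound `a^⟨t⟩`: if `a = C(k_t,t) + C(k_{t-1},t-1) + ⋯ + C(k_j,j)` is the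
binomial expansion of `a` in base `t`, then `a^⟨t⟩ = C(k_t+1,t+1) + ⋯ + C(k_j+1,j+1)`.
Computed greedily; `mac t a = a^⟨t⟩` for `t ≥ 1`. -/
def mac : ℕ → ℕ → ℕ
  | 0, _ => 0
  | t+1, a =>
    if a = 0 then 0
    else
      Nat.choose (Nat.findGreatest (fun n => Nat.choose n (t+1) ≤ a) (a + t + 1) + 1) (t+2) +
        mac t (a - Nat.choose (Nat.findGreatest (fun n => Nat.choose n (t+1) ≤ a) (a + t + 1)) (t+1))

/-- `h : ℕ → ℕ` is a finite O-sequence of length `s`: `h 0 = 1`, the entries `h 0, …, h (s-1)`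
are positive, entries from index `s` on are zero, and `h (t+1) ≤ (h t)^⟨t⟩` for all `t ≥ 1`. -/
def IsOSeq (h : ℕ → ℕ) (s : ℕ) : Prop :=
  h 0 = 1 ∧ (∀ i, 0 < h i ↔ i < s) ∧ ∀ t, 1 ≤ t → h (t + 1) ≤ mac t (h t)

/-- The multiplicity `e(h) = h_0 + ⋯ + h_{s-1}` of a finite O-sequence of length `s`. -/
def mult (h : ℕ → ℕ) (s : ℕ) : ℕ := ∑ i ∈ Finset.range s, h i

/-- The genus `g(h) = Σ_{j=2}^{s-1} (j-1)·h_j` of a finite O-sequence of length `s`. -/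
def genus (h : ℕ → ℕ) (s : ℕ) : ℕ := ∑ j ∈ Finset.range s, (j - 1) * h j

/-- The sequence obtained from `h` by increasing the `i`-th entry by `1`, i.e. `h + e_i`. -/
def addE (h : ℕ → ℕ) (i : ℕ) : ℕ → ℕ := fun j => if j = i then h j + 1 else h j

/-- The sequence obtained from `h` by decreasing the `i`-th entry by `1`, i.e. `h - e_i`. -/
def subE (h : ℕ → ℕ) (i : ℕ) : ℕ → ℕ := fun j => if j = i then h j - 1 else h j

/-- The total order on finite O-sequences of the same length: `oLT h k` iff `h_ℓ < k_ℓ`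
where `ℓ = max{ j : h_j ≠ k_j }`. -/
def oLT (h k : ℕ → ℕ) : Prop := ∃ ℓ, h ℓ < k ℓ ∧ ∀ j, ℓ < j → h j = k j

/-- The set of genera of finite O-sequences of multiplicity `d` and length `s`. -/
def genusSet (d s : ℕ) : Set ℕ := {g | ∃ h, IsOSeq h s ∧ mult h s = d ∧ genus h s = g}

/-- `G_d`: the set of genera of finite O-sequences of multiplicity `d` (of any length). -/
def GSet (d : ℕ) : Set ℕ := {g | ∃ h s, IsOSeq h s ∧ mult h s = d ∧ genus h s = g}

/-- `g` is a gap in `R_d = [0, C(d-1,2)]`: it lies in the range but is not the genus of any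
finite O-sequence of multiplicity `d`. -/
def IsGap (d g : ℕ) : Prop :=
  g ≤ Nat.choose (d - 1) 2 ∧ ∀ h s, IsOSeq h s → mult h s = d → genus h s ≠ g

/-- The O-sequence `(1, d-s+1, 1^{s-2})`, minimal in `𝒢_d^s`. -/
def minSeq (d s : ℕ) : ℕ → ℕ :=
  fun j => if j = 0 then 1 else if j = 1 then d - s + 1 else if j < s then 1 else 0

/-- The O-sequence `(1, 2^{d-s}, 1^{2s-d-1})`, maximal in `𝒢_d^s`. -/
def maxSeq (d s : ℕ) : ℕ → ℕ :=
  fun j => if j = 0 then 1 else if j ≤ d - s then 2 else if j < s then 1 else 0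

/-- The O-sequence `(1, d-1)`. -/
def twoSeq (d : ℕ) : ℕ → ℕ := fun j => if j = 0 then 1 else if j = 1 then d - 1 else 0

/-- The operation `h ↦ h - e_{s-1} + e_1` on a sequence of length `s`. -/
def downUp (h : ℕ → ℕ) (s : ℕ) : ℕ → ℕ :=
  fun j => if j = s - 1 then h j - 1 else if j = 1 then h j + 1 else h j

/-- The largest index `1 ≤ j ≤ s-1` with `h j > 1` (and `0` if there is none). -/
def topIdx (h : ℕ → ℕ) (s : ℕ) : ℕ := Nat.findGreatest (fun j => 1 < h j) (s - 1)

/-- The operation `h ↦ h - e_i + e_1` where `i = topIdx h s`. -/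
def shiftDown (h : ℕ → ℕ) (s : ℕ) : ℕ → ℕ :=
  fun j => if j = topIdx h s then h j - 1 else if j = 1 then h j + 1 else h j

/-- Auxiliary list `[m_n, m_{n-1}, …, m_1]` for the recursively defined sequence `(m_d)`. -/
def mListAux : ℕ → List ℕ
  | 0 => []
  | n+1 =>
    let prev := mListAux n
    let newVal :=
      if n = 0 then 0
      else
        (List.range' 2 (n - 1)).foldl
          (fun M k =>
            if Nat.choose k 2 - 1 ≤ M then max M (prev.getD (k - 1) 0 + Nat.choose k 2) else M)
          (prev.getD 0 0)
    newVal :: prev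

/-- The sequence `(m_d)_{d ≥ 1}`: `m_1 = 0` and, for `d ≥ 2`, `m_d` is obtained from
`M := m_{d-1}` by running over `k = 2, …, d-1` and replacing `M` by
`max M (m_{d-k} + C(k,2))` whenever `C(k,2) - 1 ≤ M`. -/
def mSeq (d : ℕ) : ℕ := (mListAux d).getD 0 0

lemma mac_zero (t : ℕ) : mac t 0 = 0 := by cases t <;> simp [mac]

lemma mac_one (t : ℕ) (ht : 1 ≤ t) : mac t 1 = 1 := by
  obtain ⟨t', rfl⟩ := Nat.exists_eq_add_of_le ht
  rw [show 1 + t' = t' + 1 by ring]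
  induction t' with
  | zero =>
    have hG : Nat.findGreatest (fun n => Nat.choose n 1 ≤ 1) (1 + 0 + 1) = 1 := by
      rw [Nat.findGreatest_eq_iff]
      refine ⟨by norm_num, fun _ => by norm_num, fun n hn hn' => ?_⟩
      simp only [Nat.choose_one_right]; omega
    simp [mac, hG]
  | succ t ih =>
    have hG : Nat.findGreatest (fun n => Nat.choose n (t + 1 + 1) ≤ 1) (1 + (t + 1) + 1)
        = t + 2 := by
      rw [Nat.findGreatest_eq_iff]
      refine ⟨by omega, fun _ => by simp, fun n hn hn' => ?_⟩
      have : n = t + 3 := by omega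
      subst this
      simp [Nat.choose_succ_self_right]
    rw [mac]
    simp only [hG, if_neg (one_ne_zero)]
    rw [Nat.choose_self, Nat.choose_self]
    simp [mac_zero]
lemma mac_one_left (a : ℕ) (ha : a ≠ 0) : mac 1 a = Nat.choose (a + 1) 2 := by
  have hG : Nat.findGreatest (fun n => Nat.choose n 1 ≤ a) (a + 0 + 1) = a := by
    rw [Nat.findGreatest_eq_iff]
    refine ⟨by omega, fun _ => by simp, fun n hn hn' => ?_⟩
    simp only [Nat.choose_one_right]; omega
  show mac (0 + 1) a = _
  rw [mac]
  simp [hG, ha, mac_zero]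

lemma mac_two (t : ℕ) (ht : 1 ≤ t) : 2 ≤ mac t 2 := by
  obtain ⟨t', rfl⟩ := Nat.exists_eq_add_of_le ht
  rw [show 1 + t' = t' + 1 by ring]
  cases t' with
  | zero => rw [mac_one_left 2 (by norm_num)]; norm_num
  | succ t =>
    have hG : Nat.findGreatest (fun n => Nat.choose n (t + 1 + 1) ≤ 2) (2 + (t + 1) + 1)
        = t + 2 := by
      rw [Nat.findGreatest_eq_iff]
      refine ⟨by omega, fun _ => by simp, fun n hn hn' => ?_⟩
      intro hc
      have hc' : Nat.choose n (t + 2) ≤ 2 := hc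
      have h1 : Nat.choose (t + 3) (t + 2) ≤ Nat.choose n (t + 2) :=
        Nat.choose_le_choose _ (by omega)
      rw [Nat.choose_succ_self_right] at h1
      omega
    rw [show t + 1 + 1 = t + 2 by ring, mac]
    simp only [hG, if_neg (two_ne_zero), Nat.choose_self]
    rw [show (2:ℕ) - 1 = 1 from rfl, mac_one (t + 1) (by omega)]
lemma two_mul_choose_two (n : ℕ) : 2 * Nat.choose n 2 = n * (n - 1) := by
  induction n with
  | zero => rfl
  | succ n ih =>
    rw [Nat.choose_succ_succ, Nat.choose_one_right, Nat.mul_add, ih]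
    cases n with
    | zero => rfl
    | succ m => simp [Nat.succ_sub_one]; ring

lemma sum_range_pred (n : ℕ) : ∑ j ∈ Finset.range n, (j - 1) = Nat.choose (n - 1) 2 := by
  induction n with
  | zero => rfl
  | succ n ih =>
    rw [Finset.sum_range_succ, ih]
    rcases Nat.eq_zero_or_pos n with h | h
    · subst h; rfl
    · obtain ⟨m, rfl⟩ : ∃ m, n = m + 1 := ⟨n - 1, by omega⟩
      have : (m + 1 + 1 - 1 : ℕ) = m + 1 := rfl
      rw [this, Nat.add_sub_cancel, Nat.choose_succ_succ, Nat.choose_one_right]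
      simp only [Nat.add_sub_cancel] at *
      have : Nat.choose m (Nat.succ 1) = Nat.choose m 2 := rfl
      omega

lemma oseq_le_one {h : ℕ → ℕ} {s : ℕ} (hO : IsOSeq h s) :
    ∀ j k, 1 ≤ j → j ≤ k → h j ≤ 1 → h k ≤ 1 := by
  obtain ⟨h0, hpos, hmac⟩ := hO
  intro j k hj hjk hj1
  induction k with
  | zero => omega
  | succ k ih =>
    rcases Nat.lt_or_ge j (k+1) with hlt | hge
    · have hk1 : h k ≤ 1 := ih (by omega)
      have := hmac k (by omega)
      rcases Nat.lt_or_ge (h k) 1 with h0' | h1'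
      · have : h k = 0 := by omega
        have h2 := hmac k (by omega)
        rw [this, mac_zero] at h2; omega
      · have : h k = 1 := by omega
        have h2 := hmac k (by omega)
        rw [this, mac_one k (by omega)] at h2; omega
    · have : j = k + 1 := by omega
      subst this; exact hj1

lemma mult_ge {h : ℕ → ℕ} {s : ℕ} (hO : IsOSeq h s) : s ≤ mult h s := by
  have : ∀ i ∈ Finset.range s, 1 ≤ h i := fun i hi =>
    (hO.2.1 i).2 (Finset.mem_range.mp hi)
  calc s = ∑ i ∈ Finset.range s, 1 := by simp
    _ ≤ mult h s := Finset.sum_le_sum this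
lemma genus_decomp {h : ℕ → ℕ} {s : ℕ} (hO : IsOSeq h s) :
    genus h s = Nat.choose (s - 1) 2 + ∑ j ∈ Finset.range s, (j - 1) * (h j - 1) := by
  have : ∀ j ∈ Finset.range s, (j - 1) * h j = (j - 1) + (j - 1) * (h j - 1) := by
    intro j hj
    have hpos : 1 ≤ h j := (hO.2.1 j).2 (Finset.mem_range.mp hj)
    obtain ⟨a, ha⟩ : ∃ a, h j = a + 1 := ⟨h j - 1, by omega⟩
    rw [ha, Nat.add_sub_cancel, Nat.mul_add, Nat.mul_one, Nat.add_comm]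
  rw [genus, Finset.sum_congr rfl this, Finset.sum_add_distrib, sum_range_pred]

lemma genus_lb {h : ℕ → ℕ} {s : ℕ} (hO : IsOSeq h s) :
    Nat.choose (s - 1) 2 ≤ genus h s := by
  rw [genus_decomp hO]; omega

lemma genus_ub {h : ℕ → ℕ} {s d : ℕ} (hO : IsOSeq h s) (hm : mult h s = d) (hs : 2 ≤ s) :
    ∃ m, m ≤ s - 1 ∧ m ≤ d - s ∧
      genus h s ≤ Nat.choose (s - 1) 2 + Nat.choose m 2 + (m - 1) * (d - s - m) := by
  set m := topIdx h s with hmdef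
  have hms : m ≤ s - 1 := Nat.findGreatest_le _
  have hone : ∀ j, m < j → j < s → h j = 1 := by
    intro j hj hjs
    have hp : 1 ≤ h j := (hO.2.1 j).2 hjs
    have := Nat.findGreatest_is_greatest (k := j) (P := fun j => 1 < h j) hj (by omega)
    omega
  have htwo : ∀ j, 1 ≤ j → j ≤ m → 2 ≤ h j := by
    intro j h1 h2
    by_contra hle
    have hPm : 1 < h m :=
      (Nat.findGreatest_eq_iff.mp hmdef.symm).2.1 (by omega)
    have := oseq_le_one hO j m h1 h2 (by omega)
    omega
  have hsub : Finset.Icc 1 m ⊆ Finset.range s := by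
    intro x hx
    simp only [Finset.mem_Icc] at hx
    simp only [Finset.mem_range]
    omega
  have hsum : ∑ j ∈ Finset.range s, (h j - 1) = d - s := by
    have hc : ∀ j ∈ Finset.range s, h j = (h j - 1) + 1 := by
      intro j hj
      have := (hO.2.1 j).2 (Finset.mem_range.mp hj); omega
    have h1 : ∑ j ∈ Finset.range s, ((h j - 1) + 1) = ∑ j ∈ Finset.range s, h j :=
      Finset.sum_congr rfl (fun j hj => (hc j hj).symm)
    rw [Finset.sum_add_distrib] at h1
    simp only [Finset.sum_const, Finset.card_range, smul_eq_mul, mul_one] at h1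
    rw [mult] at hm
    omega
  have hmain : ∑ j ∈ Finset.range s, (j - 1) * (h j - 1)
      = ∑ j ∈ Finset.Icc 1 m, (j - 1) * (h j - 1) := by
    symm
    apply Finset.sum_subset hsub
    intro x hx hxn
    simp only [Finset.mem_Icc, not_and_or, not_le] at hxn
    rcases hxn with h1 | h1
    · interval_cases x
      · rw [hO.1]; simp
    · rw [hone x h1 (Finset.mem_range.mp hx)]
      simp
  have hicc : ∑ j ∈ Finset.Icc 1 m, (j - 1) = Nat.choose m 2 := by
    have h1 : Finset.range (m + 1) = insert 0 (Finset.Icc 1 m) := by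
      ext x
      simp only [Finset.mem_range, Finset.mem_insert, Finset.mem_Icc]
      omega
    have h2 := sum_range_pred (m + 1)
    rw [h1, Finset.sum_insert (by simp)] at h2
    simpa using h2
  have hT : (∑ j ∈ Finset.Icc 1 m, (h j - 2)) + m ≤ d - s := by
    have h1 : ∑ j ∈ Finset.Icc 1 m, ((h j - 2) + 1) = ∑ j ∈ Finset.Icc 1 m, (h j - 1) := by
      apply Finset.sum_congr rfl
      intro j hj
      simp only [Finset.mem_Icc] at hj
      have := htwo j hj.1 hj.2
      omega
    have h2 : ∑ j ∈ Finset.Icc 1 m, (h j - 1) ≤ d - s := by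
      rw [← hsum]
      exact Finset.sum_le_sum_of_subset hsub
    rw [Finset.sum_add_distrib] at h1
    simp only [Finset.sum_const, Nat.card_Icc, smul_eq_mul, mul_one] at h1
    omega
  have hmd : m ≤ d - s := by
    rcases Nat.eq_zero_or_pos m with h0 | h0
    · omega
    · omega
  refine ⟨m, hms, hmd, ?_⟩
  rw [genus_decomp hO, hmain]
  have hper : ∀ j ∈ Finset.Icc 1 m, (j - 1) * (h j - 1) ≤ (j - 1) + (m - 1) * (h j - 2) := by
    intro j hj
    simp only [Finset.mem_Icc] at hj
    have h2 := htwo j hj.1 hj.2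
    have he : h j - 1 = (h j - 2) + 1 := by omega
    rw [he, Nat.mul_add, mul_one]
    have : (j - 1) * (h j - 2) ≤ (m - 1) * (h j - 2) :=
      Nat.mul_le_mul_right _ (by omega)
    omega
  have hkey : ∑ j ∈ Finset.Icc 1 m, (j - 1) * (h j - 1)
      ≤ Nat.choose m 2 + (m - 1) * (d - s - m) :=
    calc ∑ j ∈ Finset.Icc 1 m, (j - 1) * (h j - 1)
        ≤ ∑ j ∈ Finset.Icc 1 m, ((j - 1) + (m - 1) * (h j - 2)) := Finset.sum_le_sum hper
      _ = Nat.choose m 2 + (m - 1) * ∑ j ∈ Finset.Icc 1 m, (h j - 2) := by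
          rw [Finset.sum_add_distrib, hicc, Finset.mul_sum]
      _ ≤ Nat.choose m 2 + (m - 1) * (d - s - m) := by
          have h3 : ∑ j ∈ Finset.Icc 1 m, (h j - 2) ≤ d - s - m := by omega
          exact Nat.add_le_add_left (Nat.mul_le_mul_left _ h3) _
  omega
lemma C_int (s u t m : ℤ) (hu : 1 ≤ u) (hcon : u * (u - 1) ≤ 2 * s - 6) (ht2 : 2 ≤ t)
    (hts : t ≤ s) (hm1 : 1 ≤ m) (hmt : m ≤ t - 1) (hmu : m ≤ u + s - t) :
    (t - 1) * (t - 2) + m * (m - 1) + 2 * ((m - 1) * (u + s - t - m))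
      ≤ (s - 1) * (s - 2) + u * (u - 1) := by
  rcases le_or_gt (u - t + 1) 0 with hq | hq
  · nlinarith [mul_nonneg (by omega : (0:ℤ) ≤ u + s - t - m) (by omega : (0:ℤ) ≤ s - t),
      mul_nonneg (by omega : (0:ℤ) ≤ u + s - t - m) (by omega : (0:ℤ) ≤ u + s - t - m + 1),
      mul_nonneg (by omega : (0:ℤ) ≤ s - t) (by omega : (0:ℤ) ≤ t - 1 - u)]
  · nlinarith [sq_nonneg (u - t + 1 - (s - t)),
      mul_nonneg (by omega : (0:ℤ) ≤ u + s - t - m - (u - t + 1) - (s - t) + 1)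
        (by omega : (0:ℤ) ≤ u + s - t - m + (u - t + 1) + (s - t) + 1)]

lemma genus_le_max {h : ℕ → ℕ} {t s d : ℕ} (hO : IsOSeq h t) (hmu : mult h t = d)
    (ht2 : 2 ≤ t) (hts : t ≤ s) (hds : s + 1 ≤ d)
    (hcon : Nat.choose (d - s) 2 + 3 ≤ s) :
    genus h t ≤ Nat.choose (s - 1) 2 + Nat.choose (d - s) 2 := by
  obtain ⟨m, hmt, hmd, hgu⟩ := genus_ub hO hmu ht2
  rcases Nat.eq_zero_or_pos m with h0 | h0
  · subst h0
    have h1 : Nat.choose (t - 1) 2 ≤ Nat.choose (s - 1) 2 :=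
      Nat.choose_le_choose _ (by omega)
    simp only [Nat.choose_zero_succ] at hgu
    simp at hgu
    omega
  · have htd : t ≤ d := by omega
    have e1 : 2 * Nat.choose (t - 1) 2 = (t - 1) * (t - 2) := by
      rw [two_mul_choose_two, show t - 1 - 1 = t - 2 from by omega]
    have e2 : 2 * Nat.choose m 2 = m * (m - 1) := two_mul_choose_two _
    have e3 : 2 * Nat.choose (s - 1) 2 = (s - 1) * (s - 2) := by
      rw [two_mul_choose_two, show s - 1 - 1 = s - 2 from by omega]
    have e4 : 2 * Nat.choose (d - s) 2 = (d - s) * (d - s - 1) := two_mul_choose_two _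
    have hs3 : 3 ≤ s := by
      rcases Nat.eq_zero_or_pos (Nat.choose (d - s) 2) with hc | hc <;> omega
    have hn : (d - s) * (d - s - 1) + 6 ≤ 2 * s := by omega
    have hcon' : ((d:ℤ) - s) * ((d:ℤ) - s - 1) ≤ 2 * s - 6 := by
      zify [show s ≤ d from by omega, show 1 ≤ d - s from by omega] at hn
      linarith
    have hC := C_int (s : ℤ) ((d : ℤ) - s) (t : ℤ) (m : ℤ) (by omega) hcon'
      (by omega) (by omega) (by omega) (by omega) (by omega)
    have key : (t - 1) * (t - 2) + m * (m - 1) + 2 * ((m - 1) * (d - t - m))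
        ≤ (s - 1) * (s - 2) + (d - s) * (d - s - 1) := by
      zify [show 1 ≤ t from by omega, show 2 ≤ t from by omega, show 1 ≤ m from by omega,
        show m ≤ d - t from hmd, show t ≤ d from htd, show 1 ≤ s from by omega,
        show 2 ≤ s from by omega, show s ≤ d from by omega, show 1 ≤ d - s from by omega]
      nlinarith [hC]
    omega
lemma sum_Icc_pred (m : ℕ) : ∑ j ∈ Finset.Icc 1 m, (j - 1) = Nat.choose m 2 := by
  have h1 : Finset.range (m + 1) = insert 0 (Finset.Icc 1 m) := by
    ext x
    simp only [Finset.mem_range, Finset.mem_insert, Finset.mem_Icc]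
    omega
  have h2 := sum_range_pred (m + 1)
  rw [h1, Finset.sum_insert (by simp)] at h2
  simpa using h2

lemma maxSeq_oseq {d s : ℕ} (hs : 2 ≤ s) (h1 : 1 ≤ d - s) (h2 : d - s ≤ s - 1) :
    IsOSeq (maxSeq d s) s := by
  refine ⟨by simp [maxSeq], fun i => ?_, fun t ht => ?_⟩
  · unfold maxSeq
    split_ifs <;> first | omega | exact (‹False›).elim
  · have hle2 : maxSeq d s (t + 1) ≤ 2 := by
      unfold maxSeq
      split_ifs <;> first | omega | exact (‹False›).elim
    rcases Nat.lt_or_ge (d - s) t with hc | hc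
    · rcases Nat.lt_or_ge t s with hc2 | hc2
      · have : maxSeq d s t = 1 := by
          unfold maxSeq
          split_ifs <;> first | omega | exact (‹False›).elim
        rw [this, mac_one t ht]
        unfold maxSeq
        split_ifs <;> first | omega | exact (‹False›).elim
      · have h0 : maxSeq d s t = 0 := by
          unfold maxSeq
          split_ifs <;> first | omega | exact (‹False›).elim
        have h0' : maxSeq d s (t + 1) = 0 := by
          unfold maxSeq
          split_ifs <;> first | omega | exact (‹False›).elim
        rw [h0, h0', mac_zero]
    · have : maxSeq d s t = 2 := by
        unfold maxSeq
        split_ifs <;> first | omega | exact (‹False›).elim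
      rw [this]
      exact hle2.trans (mac_two t ht)

lemma filter_range_eq {s a : ℕ} (ha : a ≤ s - 1) (hs : 1 ≤ s) :
    Finset.filter (fun j => 1 ≤ j ∧ j ≤ a) (Finset.range s) = Finset.Icc 1 a := by
  ext x
  simp only [Finset.mem_filter, Finset.mem_range, Finset.mem_Icc]
  omega

lemma maxSeq_mult {d s : ℕ} (hs : 2 ≤ s) (h1 : 1 ≤ d - s) (h2 : d - s ≤ s - 1)
    (hsd : s ≤ d) : mult (maxSeq d s) s = d := by
  have hpt : ∀ j ∈ Finset.range s, maxSeq d s j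
      = 1 + (if 1 ≤ j ∧ j ≤ d - s then 1 else 0) := by
    intro j hj
    simp only [Finset.mem_range] at hj
    unfold maxSeq
    split_ifs <;> first | omega | exact (‹False›).elim
  rw [mult, Finset.sum_congr rfl hpt, Finset.sum_add_distrib]
  rw [← Finset.sum_filter, filter_range_eq h2 (by omega)]
  simp [Nat.card_Icc]
  omega

lemma maxSeq_genus {d s : ℕ} (hs : 2 ≤ s) (h1 : 1 ≤ d - s) (h2 : d - s ≤ s - 1) :
    genus (maxSeq d s) s = Nat.choose (s - 1) 2 + Nat.choose (d - s) 2 := by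
  have hpt : ∀ j ∈ Finset.range s, (j - 1) * maxSeq d s j
      = (j - 1) + (if 1 ≤ j ∧ j ≤ d - s then j - 1 else 0) := by
    intro j hj
    simp only [Finset.mem_range] at hj
    unfold maxSeq
    split_ifs <;> first | omega | exact (‹False›).elim
  rw [genus, Finset.sum_congr rfl hpt, Finset.sum_add_distrib, sum_range_pred]
  rw [← Finset.sum_filter, filter_range_eq h2 (by omega), sum_Icc_pred]
/-- Auxiliary witness: the O-sequence `(1, d-2s+3, 2^{s-2})`. -/
def bigSeq (d s : ℕ) : ℕ → ℕ :=
  fun j => if j = 0 then 1 else if j = 1 then d - 2 * s + 3 else if j < s then 2 else 0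

lemma bigSeq_oseq {d s : ℕ} (hs : 3 ≤ s) (hd : 2 * s ≤ d) : IsOSeq (bigSeq d s) s := by
  refine ⟨by simp [bigSeq], fun i => ?_, fun t ht => ?_⟩
  · unfold bigSeq
    split_ifs <;> omega
  · rcases Nat.lt_or_ge t 2 with hc | hc
    · have h1 : t = 1 := by omega
      subst h1
      have hv : bigSeq d s 1 = d - 2 * s + 3 := by
        unfold bigSeq
        split_ifs <;> first | omega | exact (‹False›).elim
      have hv2 : bigSeq d s (1 + 1) ≤ 2 := by
        unfold bigSeq
        split_ifs <;> first | omega | exact (‹False›).elim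
      rw [hv, mac_one_left _ (by omega)]
      have : Nat.choose 3 2 ≤ Nat.choose (d - 2 * s + 3 + 1) 2 :=
        Nat.choose_le_choose _ (by omega)
      have h3 : Nat.choose 3 2 = 3 := by decide
      omega
    · rcases Nat.lt_or_ge t s with hc2 | hc2
      · have hv : bigSeq d s t = 2 := by
          unfold bigSeq
          split_ifs <;> first | omega | exact (‹False›).elim
        have hv2 : bigSeq d s (t + 1) ≤ 2 := by
          unfold bigSeq
          split_ifs <;> first | omega | exact (‹False›).elim
        rw [hv]
        exact hv2.trans (mac_two t ht)
      · have hv : bigSeq d s t = 0 := by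
          unfold bigSeq
          split_ifs <;> first | omega | exact (‹False›).elim
        have hv2 : bigSeq d s (t + 1) = 0 := by
          unfold bigSeq
          split_ifs <;> first | omega | exact (‹False›).elim
        rw [hv, hv2, mac_zero]

lemma bigSeq_mult {d s : ℕ} (hs : 3 ≤ s) (hd : 2 * s ≤ d) : mult (bigSeq d s) s = d := by
  have hpt : ∀ j ∈ Finset.range s, bigSeq d s j
      = 1 + ((if 1 ≤ j ∧ j ≤ s - 1 then 1 else 0) + if j = 1 then d - 2 * s + 1 else 0) := by
    intro j hj
    simp only [Finset.mem_range] at hj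
    unfold bigSeq
    split_ifs <;> first | omega | exact (‹False›).elim
  rw [mult, Finset.sum_congr rfl hpt, Finset.sum_add_distrib, Finset.sum_add_distrib]
  rw [← Finset.sum_filter, filter_range_eq (le_refl _) (by omega)]
  rw [Finset.sum_ite_eq' (Finset.range s) 1 (fun _ => d - 2 * s + 1)]
  simp [Nat.card_Icc, Finset.mem_range, show (1:ℕ) < s from by omega]
  omega

lemma bigSeq_genus {d s : ℕ} (hs : 3 ≤ s) (hd : 2 * s ≤ d) :
    genus (bigSeq d s) s = 2 * Nat.choose (s - 1) 2 := by
  have hpt : ∀ j ∈ Finset.range s, (j - 1) * bigSeq d s j = 2 * (j - 1) := by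
    intro j hj
    simp only [Finset.mem_range] at hj
    unfold bigSeq
    split_ifs <;> first | omega | (subst_vars; simp) | exact (‹False›).elim
  rw [genus, Finset.sum_congr rfl hpt, ← Finset.mul_sum, sum_range_pred]
lemma sq_expand {u : ℕ} (hu : 1 ≤ u) : u * (u - 1) + u = u * u := by
  obtain ⟨v, rfl⟩ : ∃ v, u = v + 1 := ⟨u - 1, by omega⟩
  simp [Nat.add_sub_cancel]
  ring

lemma bridge {d s : ℕ} (hd : 2 < d) (hs : 2 ≤ s) (hsd : s ≤ d - 1) :
    ((2 * (d : ℝ) + 1 - Real.sqrt (8 * (d : ℝ) - 15)) / 2 < (s : ℝ)) ↔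
      (d - s) * (d - s - 1) + 4 < 2 * s := by
  have hsd' : s ≤ d := by omega
  have hcast : ((d - s : ℕ) : ℝ) = (d : ℝ) - s := by
    push_cast [Nat.cast_sub hsd']
    ring
  have h1 : ((2 * (d : ℝ) + 1 - Real.sqrt (8 * (d : ℝ) - 15)) / 2 < (s : ℝ)) ↔
      (2 * ((d - s : ℕ) : ℝ) + 1 < Real.sqrt (8 * (d : ℝ) - 15)) := by
    rw [div_lt_iff₀ (by norm_num : (0:ℝ) < 2), hcast]
    constructor <;> intro <;> linarith
  have h2 : (2 * ((d - s : ℕ) : ℝ) + 1 < Real.sqrt (8 * (d : ℝ) - 15)) ↔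
      (2 * ((d - s : ℕ) : ℝ) + 1) ^ 2 < 8 * (d : ℝ) - 15 :=
    Real.lt_sqrt (by positivity)
  rw [h1, h2]
  have h3 : ((2 * (d - s) + 1 : ℕ) : ℝ) = 2 * ((d - s : ℕ) : ℝ) + 1 := by push_cast; ring
  constructor
  · intro h
    have h4 : ((2 * (d - s) + 1 : ℕ) : ℝ) ^ 2 + 15 < 8 * (d : ℝ) := by rw [h3]; linarith
    have h5 : (2 * (d - s) + 1) ^ 2 + 15 < 8 * d := by exact_mod_cast h4
    have h6 := sq_expand (show 1 ≤ d - s by omega)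
    have h7 : (2 * (d - s) + 1) ^ 2 = 4 * ((d - s) * (d - s)) + 4 * (d - s) + 1 := by ring
    omega
  · intro h
    have h6 := sq_expand (show 1 ≤ d - s by omega)
    have h7 : (2 * (d - s) + 1) ^ 2 = 4 * ((d - s) * (d - s)) + 4 * (d - s) + 1 := by ring
    have h5 : (2 * (d - s) + 1) ^ 2 + 15 < 8 * d := by omega
    have h4 : ((2 * (d - s) + 1 : ℕ) : ℝ) ^ 2 + 15 < 8 * (d : ℝ) := by exact_mod_cast h5
    rw [h3] at h4
    linarith

/-- Let `d > 2`, `2 ≤ s ≤ d-1`, and let `M` be the maximal genus of a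
finite O-sequence of multiplicity `d` and length `s`. Then `M < C(s,2) - 1` if and only if
`(2d + 1 - √(8d-15))/2 < s ≤ d-1`; moreover, in that case every integer in
`[M + 1, C(s,2) - 1]` is a gap in `R_d`. -/
theorem stmt11 (d s M : ℕ) (hd : 2 < d) (hs : 2 ≤ s) (hsd : s ≤ d - 1)
    (hM : IsGreatest (genusSet d s) M) :
    (M < Nat.choose s 2 - 1 ↔
      ((2 * (d : ℝ) + 1 - Real.sqrt (8 * (d : ℝ) - 15)) / 2 < (s : ℝ) ∧ s ≤ d - 1)) ∧
    ((2 * (d : ℝ) + 1 - Real.sqrt (8 * (d : ℝ) - 15)) / 2 < (s : ℝ) →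
      ∀ g : ℕ, M + 1 ≤ g → g ≤ Nat.choose s 2 - 1 → IsGap d g) := by
  have hu1 : 1 ≤ d - s := by omega
  have hbr := bridge hd hs hsd
  have hC : Nat.choose s 2 = (s - 1) + Nat.choose (s - 1) 2 := by
    obtain ⟨v, rfl⟩ : ∃ v, s = v + 1 := ⟨s - 1, by omega⟩
    simp [Nat.choose_succ_succ, Nat.choose_one_right, Nat.add_sub_cancel]
  have heu : 2 * Nat.choose (d - s) 2 = (d - s) * (d - s - 1) := two_mul_choose_two _
  -- upper bound on M, valid unconditionally via hM.1 when needed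
  have hMin : ∃ h, IsOSeq h s ∧ mult h s = d ∧ genus h s = M := hM.1
  -- the two main facts under the real condition (in nat form)
  have main : (d - s) * (d - s - 1) + 4 < 2 * s →
      (M = Nat.choose (s - 1) 2 + Nat.choose (d - s) 2 ∧ d - s ≤ s - 1) := by
    intro hreal
    have hcon : Nat.choose (d - s) 2 + 3 ≤ s := by omega
    have hds1 : d - s ≤ s - 1 := by
      by_contra hcs
      push_neg at hcs
      have h1 : s * (s - 1) ≤ (d - s) * (d - s - 1) :=
        Nat.mul_le_mul (by omega) (by omega)
      have h2 : 2 * (s - 1) ≤ s * (s - 1) := Nat.mul_le_mul_right _ (by omega)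
      omega
    have hle : M ≤ Nat.choose (s - 1) 2 + Nat.choose (d - s) 2 := by
      obtain ⟨h, hO, hm, hg⟩ := hMin
      rw [← hg]
      exact genus_le_max hO hm hs (le_refl s) (by omega) hcon
    have hge : Nat.choose (s - 1) 2 + Nat.choose (d - s) 2 ≤ M :=
      hM.2 ⟨maxSeq d s, maxSeq_oseq hs hu1 hds1, maxSeq_mult hs hu1 hds1 (by omega),
        maxSeq_genus hs hu1 hds1⟩
    exact ⟨le_antisymm hle hge, hds1⟩
  constructor
  · constructor
    · intro hMlt
      refine ⟨?_, hsd⟩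
      rw [hbr]
      by_contra hcon
      push_neg at hcon
      rcases Nat.lt_or_ge (d - s) s with hcase | hcase
      · -- maxSeq witness
        have hds1 : d - s ≤ s - 1 := by omega
        have hge : Nat.choose (s - 1) 2 + Nat.choose (d - s) 2 ≤ M :=
          hM.2 ⟨maxSeq d s, maxSeq_oseq hs hu1 hds1, maxSeq_mult hs hu1 hds1 (by omega),
            maxSeq_genus hs hu1 hds1⟩
        omega
      · -- bigSeq witness, d ≥ 2s
        rcases Nat.lt_or_ge s 3 with hs2 | hs3
        · have h22 : Nat.choose s 2 = 1 := by
            rw [show s = 2 from by omega]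
            decide
          omega
        · have hge : 2 * Nat.choose (s - 1) 2 ≤ M :=
            hM.2 ⟨bigSeq d s, bigSeq_oseq hs3 (by omega), bigSeq_mult hs3 (by omega),
              bigSeq_genus hs3 (by omega)⟩
          have hq : s * (s - 1) ≤ 2 * ((s - 1) * (s - 2)) + 2 := by
            zify [show 1 ≤ s from by omega, show 2 ≤ s from hs]
            nlinarith [show (3:ℤ) ≤ (s:ℤ) from by exact_mod_cast hs3]
          have e3 : 2 * Nat.choose (s - 1) 2 = (s - 1) * (s - 2) := by
            rw [two_mul_choose_two, show s - 1 - 1 = s - 2 from by omega]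
          have e4 : 2 * Nat.choose s 2 = s * (s - 1) := by
            rw [two_mul_choose_two]
          omega
    · rintro ⟨hreal, -⟩
      rw [hbr] at hreal
      obtain ⟨hMval, hds1⟩ := main hreal
      omega
  · intro hreal g hg1 hg2
    rw [hbr] at hreal
    obtain ⟨hMval, hds1⟩ := main hreal
    have hcon : Nat.choose (d - s) 2 + 3 ≤ s := by omega
    constructor
    · have : Nat.choose s 2 ≤ Nat.choose (d - 1) 2 := Nat.choose_le_choose _ hsd
      omega
    · intro h' s' hO' hm' hEq
      rcases Nat.lt_or_ge s' 2 with hsml | hs2'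
      · interval_cases s'
        · rw [mult] at hm'; simp at hm'; omega
        · rw [mult, Finset.sum_range_one, hO'.1] at hm'; omega
      · rcases Nat.lt_or_ge s s' with hgt | hle
        · have hlb := genus_lb hO'
          have h2 : Nat.choose s 2 ≤ Nat.choose (s' - 1) 2 :=
            Nat.choose_le_choose _ (by omega)
          have h3 : 1 ≤ Nat.choose s 2 := by
            have := Nat.choose_le_choose 2 hs
            simp [Nat.choose_self] at this
            omega
          omega
        · have := genus_le_max hO' hm' hs2' hle (by omega) hcon
          omega
end

section
/- Let d and j be integers with 1 ≤ j ≤ d - 1. If g is the genus of some finite O-sequence of multiplicity j, then g + C(d-j, 2) is the genus of some finite O-sequence of multiplicity d. Equivalently, G_d ⊇ ⋃_{j=1}^{d-1} ( G_j + C(d-j,2) ), where G_m denotes the set of genera of finite O-sequences of multiplicity m. -/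
lemma mac_succ (t a : ℕ) (ha : a ≠ 0) :
    mac (t+1) a =
      Nat.choose (Nat.findGreatest (fun n => Nat.choose n (t+1) ≤ a) (a + t + 1) + 1) (t+2) +
        mac t (a - Nat.choose (Nat.findGreatest (fun n => Nat.choose n (t+1) ≤ a) (a + t + 1)) (t+1)) := by
  rw [mac]
  simp [ha]

lemma choose_lb : ∀ t n : ℕ, t + 1 ≤ n → n ≤ Nat.choose n (t+1) + t := by
  intro t
  induction t with
  | zero => intro n h; simp [Nat.choose_one_right]
  | succ t ih =>
    intro n h
    obtain ⟨m, rfl⟩ : ∃ m, n = m + 1 := ⟨n - 1, by omega⟩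
    rw [Nat.choose_succ_succ']
    have := ih m (by omega)
    omega

lemma macN_spec (t a : ℕ) (ha : 1 ≤ a) :
    (t + 1 ≤ Nat.findGreatest (fun n => Nat.choose n (t+1) ≤ a) (a + t + 1)) ∧
    Nat.choose (Nat.findGreatest (fun n => Nat.choose n (t+1) ≤ a) (a + t + 1)) (t+1) ≤ a ∧
    a < Nat.choose (Nat.findGreatest (fun n => Nat.choose n (t+1) ≤ a) (a + t + 1) + 1) (t+1) := by
  set N := Nat.findGreatest (fun n => Nat.choose n (t+1) ≤ a) (a + t + 1) with hN
  have hP : Nat.choose (t+1) (t+1) ≤ a := by rw [Nat.choose_self]; exact ha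
  have h1 : t + 1 ≤ N := Nat.le_findGreatest (by omega) hP
  have h2 : Nat.choose N (t+1) ≤ a :=
    Nat.findGreatest_spec (P := fun n => Nat.choose n (t+1) ≤ a) (m := t+1) (by omega) hP
  have hlt : N < a + t + 1 := by
    rcases Nat.lt_or_ge N (a + t + 1) with h | h
    · exact h
    · exfalso
      have hb : N ≤ a + t + 1 := Nat.findGreatest_le _
      have hNe : N = a + t + 1 := le_antisymm hb h
      rw [hNe] at h2
      have := choose_lb t (a + t + 1) (by omega)
      omega
  have h3 : ¬ (Nat.choose (N+1) (t+1) ≤ a) :=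
    Nat.findGreatest_is_greatest (P := fun n => Nat.choose n (t+1) ≤ a) (n := a + t + 1) (k := N + 1) (by omega) (by omega)
  exact ⟨h1, h2, by omega⟩

lemma mac_lt_choose : ∀ t, 1 ≤ t → ∀ m r, t ≤ m → r < Nat.choose m t →
    mac t r < Nat.choose (m+1) (t+1) := by
  intro t
  induction t with
  | zero => omega
  | succ t ih =>
    intro _ m r hm hr
    rcases Nat.eq_zero_or_pos r with rfl | hr1
    · rw [mac_zero]; exact Nat.choose_pos (by omega)
    obtain ⟨h1, h2, h3⟩ := macN_spec t r hr1
    set N := Nat.findGreatest (fun n => Nat.choose n (t+1) ≤ r) (r + t + 1) with hN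
    rw [mac_succ t r (by omega)]
    have hNm : N < m := by
      by_contra h
      have := Nat.choose_le_choose (t+1) (show m ≤ N by omega)
      omega
    have hcss := Nat.choose_succ_succ' N t
    have hrem : r - Nat.choose N (t+1) < Nat.choose N t := by omega
    have hmac : mac t (r - Nat.choose N (t+1)) < Nat.choose (N+1) (t+1) := by
      rcases Nat.eq_zero_or_pos t with rfl | ht'
      · rw [show mac 0 (r - Nat.choose N 1) = 0 from rfl]
        exact Nat.choose_pos (by omega)
      · exact ih ht' N _ (by omega) hrem
    have hsum := Nat.choose_succ_succ' (N+1) (t+1)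
    have hle : Nat.choose (N+2) (t+2) ≤ Nat.choose (m+1) (t+2) :=
      Nat.choose_le_choose _ (by omega)
    simp only [← hN, show t+1+1 = t+2 from rfl, show N+1+1 = N+2 from rfl] at *
    omega

lemma mac_one_eq (a : ℕ) : mac 1 a = Nat.choose (a+1) 2 := by
  rcases Nat.eq_zero_or_pos a with rfl | ha
  · simp [mac_zero]
  obtain ⟨h1, h2, h3⟩ := macN_spec 0 a ha
  set N := Nat.findGreatest (fun n => Nat.choose n (0+1) ≤ a) (a + 0 + 1) with hN
  have hNa : N = a := by
    rw [Nat.choose_one_right] at h2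
    rw [Nat.choose_one_right] at h3
    omega
  rw [mac_succ 0 a (by omega)]
  rw [← hN, hNa, Nat.choose_one_right, Nat.sub_self, mac_zero]
  simp

lemma mac_add_one : ∀ t a, mac (t+1) a + 1 ≤ mac (t+1) (a+1) := by
  intro t
  induction t with
  | zero =>
    intro a
    rw [mac_one_eq, mac_one_eq]
    have h := Nat.choose_succ_succ' (a+1) 1
    rw [Nat.choose_one_right] at h
    simp only [show (1:ℕ) + 1 = 2 from rfl, show a + 1 + 1 = a + 2 from rfl] at h ⊢
    omega
  | succ t ih =>
    intro a
    rcases Nat.eq_zero_or_pos a with rfl | ha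
    · rw [mac_zero]
      obtain ⟨h1, _, _⟩ := macN_spec (t+1) 1 le_rfl
      rw [mac_succ (t+1) 1 one_ne_zero]
      have hp : 0 < Nat.choose
          (Nat.findGreatest (fun n => Nat.choose n (t+1+1) ≤ 1) (1 + (t+1) + 1) + 1) (t+1+2) :=
        Nat.choose_pos (by omega)
      omega
    obtain ⟨h1, h2, h3⟩ := macN_spec (t+1) a ha
    obtain ⟨h1', h2', h3'⟩ := macN_spec (t+1) (a+1) (by omega)
    set N := Nat.findGreatest (fun n => Nat.choose n (t+1+1) ≤ a) (a + (t+1) + 1) with hN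
    set N' := Nat.findGreatest (fun n => Nat.choose n (t+1+1) ≤ (a+1)) (a + 1 + (t+1) + 1) with hN'
    have hNN' : N ≤ N' := by
      apply Nat.le_findGreatest
      · have := Nat.findGreatest_le (P := fun n => Nat.choose n (t+1+1) ≤ a) (a + (t+1) + 1)
        omega
      · show Nat.choose N (t+1+1) ≤ a + 1
        omega
    rw [mac_succ (t+1) a (by omega), mac_succ (t+1) (a+1) (by omega), ← hN, ← hN']
    have hrem : a - Nat.choose N (t+1+1) < Nat.choose N (t+1) := by
      have := Nat.choose_succ_succ' N (t+1)
      omega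
    have hmac : mac (t+1) (a - Nat.choose N (t+1+1)) < Nat.choose (N+1) (t+1+1) := by
      rcases Nat.eq_zero_or_pos (a - Nat.choose N (t+1+1)) with hz | hpos
      · rw [hz, mac_zero]; exact Nat.choose_pos (by omega)
      · exact mac_lt_choose (t+1) (by omega) N _ (by omega) hrem
    rcases eq_or_lt_of_le hNN' with heq | hlt
    · rw [← heq]
      have he : a + 1 - Nat.choose N (t+1+1) = (a - Nat.choose N (t+1+1)) + 1 := by omega
      rw [he]
      have := ih (a - Nat.choose N (t+1+1))
      omega
    · have e1 : a + 1 ≤ Nat.choose (N+1) (t+1+1) := h3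
      have e2 : Nat.choose (N+1) (t+1+1) ≤ Nat.choose N' (t+1+1) :=
        Nat.choose_le_choose _ (by omega)
      have e3 : Nat.choose N' (t+1+1) ≤ a + 1 := h2'
      have hz : a + 1 - Nat.choose N' (t+1+1) = 0 := by omega
      rw [hz, mac_zero]
      have e4 : Nat.choose (N+2) (t+1+2) ≤ Nat.choose (N'+1) (t+1+2) :=
        Nat.choose_le_choose _ (by omega)
      have e5 := Nat.choose_succ_succ' (N+1) (t+1+1)
      simp only [show t+1+1+1 = t+1+2 from rfl, show N+1+1 = N+2 from rfl] at e5
      omega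

lemma mac_le_mac (t : ℕ) : ∀ a b, a ≤ b → mac (t+1) a ≤ mac (t+1) b := by
  intro a b
  induction b with
  | zero => intro h; have ha : a = 0 := by omega
            rw [ha]
  | succ b ihb =>
    intro h
    rcases Nat.lt_or_ge a (b+1) with h' | h'
    · have := mac_add_one t b
      have := ihb (by omega)
      omega
    · have : a = b + 1 := by omega
      rw [this]

lemma sum_ind (f : ℕ → ℕ) (k n : ℕ) (h : k < n) :
    (∑ i ∈ Finset.range n, (if 1 ≤ i ∧ i ≤ k then f i else 0)) = ∑ i ∈ Finset.Icc 1 k, f i := by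
  have h1 : ∀ i, (if 1 ≤ i ∧ i ≤ k then f i else 0) = (if i ∈ Finset.Icc 1 k then f i else 0) := by
    intro i; simp [Finset.mem_Icc]
  simp only [h1]
  rw [Finset.sum_ite_mem]
  congr 1
  rw [Finset.inter_eq_right]
  intro i hi
  simp only [Finset.mem_Icc] at hi
  simp only [Finset.mem_range]
  omega

lemma sum_Icc_sub_one : ∀ k : ℕ, (∑ i ∈ Finset.Icc 1 k, (i - 1)) = Nat.choose k 2 := by
  intro k
  induction k with
  | zero => simp
  | succ k ih =>
    rw [Finset.sum_Icc_succ_top (by omega), ih]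
    have := Nat.choose_succ_succ' k 1
    rw [Nat.choose_one_right] at this
    simp only [show (1:ℕ) + 1 = 2 from rfl] at this
    omega

/-- For `1 ≤ j ≤ d - 1`: if `g` is the genus of some finite O-sequence of
multiplicity `j`, then `g + C(d-j,2)` is the genus of some finite O-sequence of multiplicity
`d`; i.e. `G_d ⊇ ⋃_{j=1}^{d-1} (G_j + C(d-j,2))`. -/
theorem stmt16 (d j : ℕ) (hj1 : 1 ≤ j) (hj2 : j ≤ d - 1) :
    ∀ g ∈ GSet j, g + Nat.choose (d - j) 2 ∈ GSet d := by
  intro g hg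
  obtain ⟨h, s, hO, hm, hgen⟩ := hg
  obtain ⟨h0, hpos, hmacc⟩ := hO
  set k := d - j with hk
  have hd : d = j + k := by omega
  have hk1 : 1 ≤ k := by omega
  have hs1 : 1 ≤ s := by
    have := (hpos 0).mp (by omega)
    omega
  set s' := max s (k + 1) with hs'
  have hmax1 : s ≤ s' := le_max_left _ _
  have hmax2 : k + 1 ≤ s' := le_max_right _ _
  have hmax3 : s' = s ∨ s' = k + 1 := max_choice s (k + 1)
  clear_value s'
  clear hs'
  refine ⟨fun i => h i + (if 1 ≤ i ∧ i ≤ k then 1 else 0), s', ⟨?_, ?_, ?_⟩, ?_, ?_⟩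
  · simp [h0]
  · intro i
    constructor
    · intro hi
      beta_reduce at hi
      by_contra hc
      push_neg at hc
      have hzero : h i = 0 := by
        have h2 : ¬ 0 < h i := fun hh => absurd ((hpos i).mp hh) (by omega)
        omega
      have hind : ¬ (1 ≤ i ∧ i ≤ k) := by omega
      rw [if_neg hind] at hi
      omega
    · intro hi
      rcases Nat.lt_or_ge i s with h' | h'
      · have := (hpos i).mpr h'
        beta_reduce
        omega
      · have hi2 : 1 ≤ i ∧ i ≤ k := by rcases hmax3 with hh | hh <;> omega
        beta_reduce
        rw [if_pos hi2]
        omega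
  · intro t ht
    beta_reduce
    obtain ⟨t', rfl⟩ : ∃ t', t = t' + 1 := ⟨t - 1, by omega⟩
    have hstep := hmacc (t' + 1) ht
    by_cases hc : t' + 1 + 1 ≤ k
    · have hc1 : 1 ≤ t' + 1 ∧ t' + 1 ≤ k := by omega
      have hc2 : 1 ≤ t' + 1 + 1 ∧ t' + 1 + 1 ≤ k := by omega
      simp only [if_pos hc1, if_pos hc2]
      have := mac_add_one t' (h (t' + 1))
      omega
    · have hc2 : ¬ (1 ≤ t' + 1 + 1 ∧ t' + 1 + 1 ≤ k) := by omega
      simp only [if_neg hc2, add_zero]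
      have hmono : mac (t' + 1) (h (t' + 1)) ≤
          mac (t' + 1) (h (t' + 1) + (if 1 ≤ t' + 1 ∧ t' + 1 ≤ k then 1 else 0)) :=
        mac_le_mac t' _ _ (by omega)
      omega
  · rw [mult, Finset.sum_add_distrib]
    have e1 : (∑ i ∈ Finset.range s', h i) = j := by
      rw [← hm, mult]
      refine (Finset.sum_subset (Finset.range_subset_range.mpr hmax1) ?_).symm
      intro x _ hx
      simp only [Finset.mem_range] at hx
      have h2 : ¬ 0 < h x := fun hh => absurd ((hpos x).mp hh) (by omega)
      omega
    have e2 : (∑ i ∈ Finset.range s', (if 1 ≤ i ∧ i ≤ k then 1 else 0)) = k := by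
      rw [sum_ind (fun _ => 1) k s' (by omega)]
      simp [Nat.card_Icc]
    omega
  · rw [genus]
    simp only [Nat.mul_add, mul_ite, mul_one, mul_zero]
    rw [Finset.sum_add_distrib]
    have e1 : (∑ i ∈ Finset.range s', (i - 1) * h i) = g := by
      rw [← hgen, genus]
      refine (Finset.sum_subset (Finset.range_subset_range.mpr hmax1) ?_).symm
      intro x _ hx
      simp only [Finset.mem_range] at hx
      have h2 : ¬ 0 < h x := fun hh => absurd ((hpos x).mp hh) (by omega)
      simp [show h x = 0 by omega]
    have e2 : (∑ i ∈ Finset.range s', (if 1 ≤ i ∧ i ≤ k then i - 1 else 0)) = Nat.choose k 2 := by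
      rw [sum_ind (fun i => i - 1) k s' (by omega)]
      exact sum_Icc_sub_one k
    omega
end

section
/- For every integer d ≥ 18, the quantity m_d satisfies m_d ≥ C(⌈d/2⌉ + 1, 2). -/
-- general foldl lemmas
lemma foldl_ge_init (f : ℕ → ℕ → ℕ) (hf : ∀ M k, M ≤ f M k) :
    ∀ (l : List ℕ) (init : ℕ), init ≤ l.foldl f init := by
  intro l
  induction l with
  | nil => intro init; simp
  | cons a t ih => intro init; exact le_trans (hf init a) (ih (f init a))

lemma foldl_mem_ge (g : ℕ → ℕ) :
    ∀ (l : List ℕ) (init k : ℕ), k ∈ l → Nat.choose k 2 - 1 ≤ init →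
      g k + Nat.choose k 2 ≤ l.foldl
        (fun M k => if Nat.choose k 2 - 1 ≤ M then max M (g k + Nat.choose k 2) else M) init := by
  intro l
  induction l with
  | nil => intro init k hk; simp at hk
  | cons a t ih =>
    intro init k hk hc
    set f : ℕ → ℕ → ℕ :=
      fun M k => if Nat.choose k 2 - 1 ≤ M then max M (g k + Nat.choose k 2) else M with hfdef
    have hf : ∀ M k, M ≤ f M k := by
      intro M k; simp only [hfdef]; split <;> simp
    rcases List.mem_cons.mp hk with h | h
    · subst h
      have h1 : f init k = max init (g k + Nat.choose k 2) := by
        simp only [hfdef, if_pos hc]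
      calc g k + Nat.choose k 2 ≤ f init k := by rw [h1]; exact le_max_right _ _
        _ ≤ _ := foldl_ge_init f hf t _
    · exact ih (f init a) k h (le_trans hc (hf init a))

lemma mListAux_getD (n : ℕ) : ∀ i, (mListAux n).getD i 0 = mSeq (n - i) := by
  induction n with
  | zero => intro i; simp [mListAux, mSeq]
  | succ n ih =>
    intro i
    cases i with
    | zero => rfl
    | succ i =>
      show (mListAux n).getD i 0 = _
      rw [ih i]
      congr 1
      omega

lemma mSeq_succ (n : ℕ) (hn : n ≠ 0) :
    mSeq (n+1) = (List.range' 2 (n - 1)).foldl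
      (fun M k => if Nat.choose k 2 - 1 ≤ M then
        max M (mSeq (n - (k-1)) + Nat.choose k 2) else M) (mSeq n) := by
  show (mListAux (n+1)).getD 0 0 = _
  simp only [mListAux, List.getD_cons_zero, if_neg hn]
  rw [show (mListAux n).getD 0 0 = mSeq n from by rw [mListAux_getD]; simp]
  congr 1
  funext M k
  rw [mListAux_getD]

lemma mSeq_mono_succ (n : ℕ) : mSeq n ≤ mSeq (n+1) := by
  rcases Nat.eq_zero_or_pos n with h | h
  · subst h; decide
  · rw [mSeq_succ n (by omega)]
    apply foldl_ge_init
    intro M k; split <;> simp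

lemma mSeq_step (n k : ℕ) (h2 : 2 ≤ k) (h3 : k ≤ n)
    (h4 : Nat.choose k 2 - 1 ≤ mSeq n) :
    mSeq (n + 1 - k) + Nat.choose k 2 ≤ mSeq (n+1) := by
  have hn : n ≠ 0 := by omega
  rw [mSeq_succ n hn]
  have hmem : k ∈ List.range' 2 (n - 1) := by
    rw [List.mem_range'_1]
    omega
  have := foldl_mem_ge (fun k => mSeq (n - (k-1))) (List.range' 2 (n-1)) (mSeq n) k hmem h4
  simpa [show n - (k-1) = n + 1 - k from by omega] using this

set_option maxRecDepth 10000 in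
lemma mSeq_vals : mSeq 9 = 11 ∧ mSeq 10 = 13 ∧ mSeq 11 = 18 ∧ mSeq 18 = 52 := by decide

lemma mSeq_mono {a b : ℕ} (h : a ≤ b) : mSeq a ≤ mSeq b := by
  induction b with
  | zero => simp_all
  | succ b ih =>
    rcases Nat.lt_or_ge a (b+1) with h' | h'
    · exact le_trans (ih (by omega)) (mSeq_mono_succ b)
    · have : a = b + 1 := by omega
      subst this; rfl

lemma mSeq_linear (n : ℕ) (hn : 9 ≤ n) : n + 1 ≤ mSeq n := by
  induction n using Nat.strong_induction_on with
  | _ n ih =>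
    rcases Nat.lt_or_ge n 12 with h | h
    · interval_cases n
      · rw [mSeq_vals.1]; omega
      · rw [mSeq_vals.2.1]; omega
      · rw [mSeq_vals.2.2.1]; omega
    · -- n ≥ 12, use k = 3 on n = (n-1)+1
      have h1 : mSeq 9 ≤ mSeq (n-1) := mSeq_mono (by omega)
      have h4 : Nat.choose 3 2 - 1 ≤ mSeq (n-1) := by
        rw [mSeq_vals.1] at h1; simpa using le_trans (by norm_num) h1
      have := mSeq_step (n-1) 3 (by norm_num) (by omega) h4
      have hih := ih (n-3) (by omega) (by omega)
      have he1 : n - 1 + 1 = n := by omega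
      have he2 : n - 1 + 1 - 3 = n - 3 := by omega
      rw [he1] at this
      have : Nat.choose 3 2 = 3 := by decide
      omega

/-- For every `d ≥ 18`, `m_d ≥ C(⌈d/2⌉ + 1, 2)`. -/
theorem stmt18 (d : ℕ) (hd : 18 ≤ d) : Nat.choose ((d + 1) / 2 + 1) 2 ≤ mSeq d := by
  induction d using Nat.strong_induction_on with
  | _ d ih =>
    rcases Nat.lt_or_ge d 19 with h | h
    · have : d = 18 := by omega
      subst this
      rw [mSeq_vals.2.2.2]; decide
    · -- d ≥ 19
      have hprev := ih (d-1) (by omega) (by omega)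
      rcases Nat.even_or_odd d with he | ho
      · -- even: k = d/2 + 1
        obtain ⟨m, hm⟩ := he
        set k := d/2 + 1 with hk
        have hk2 : 2 ≤ k := by omega
        have hk3 : k ≤ d - 1 := by omega
        have heq : (d - 1 + 1)/2 + 1 = k := by omega
        rw [heq] at hprev
        have h4 : Nat.choose k 2 - 1 ≤ mSeq (d-1) := by omega
        have := mSeq_step (d-1) k hk2 hk3 h4
        rw [show d - 1 + 1 = d from by omega] at this
        have heq2 : (d+1)/2 + 1 = k := by omega
        rw [heq2]
        omega
      · -- odd: k = (d+1)/2
        obtain ⟨m, hm⟩ := ho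
        set k := (d+1)/2 with hk
        have hk2 : 2 ≤ k := by omega
        have hk3 : k ≤ d - 1 := by omega
        have heq : (d - 1 + 1)/2 + 1 = k := by omega
        rw [heq] at hprev
        have h4 : Nat.choose k 2 - 1 ≤ mSeq (d-1) := by omega
        have hstep := mSeq_step (d-1) k hk2 hk3 h4
        rw [show d - 1 + 1 = d from by omega, show d - k = (d-1)/2 from by omega] at hstep
        have hlin : (d-1)/2 + 1 ≤ mSeq ((d-1)/2) := mSeq_linear _ (by omega)
        have hch : Nat.choose (k+1) 2 = k + Nat.choose k 2 := by
          rw [Nat.choose_succ_succ]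
          simp [Nat.choose_one_right]
        have heq3 : (d+1)/2 + 1 = k + 1 := by omega
        rw [heq3, hch]
        omega
end
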